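/- Let p ≥ 3 be an integer, C₁ > 0, and let v be an L-periodic arc-length curve of class C³. Then there exists a constant C > 0 (depending only on v, p, C₁) with the following property: for every sequence s : ℤ → ℝ, all i, K ∈ ℤ with 2i ≤ K ≤ 2i + p + 2, and all ξ, s̄, d ∈ ℝ such that (a) v(s̄) = (S_p(v∘s))_K + d·n(ξ), (b) |ξ − s_k| ≤ C₁·h for every k with i ≤ k ≤ i + p + 1, and (c) |s̄ − ξ| ≤ C₁·h, where h := max_{i ≤ l ≤ i+p} |s_{l+1} − s_l|, one has |s̄ − (S_p s)_K| ≤ C·h³. -/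

import Mathlib

/-- The Lane–Riesenfeld (B-spline) subdivision operator `S p`, acting on sequences with
values in a real vector space (componentwise averaging). -/
noncomputable def S {E : Type*} [AddCommGroup E] [Module ℝ E] : ℕ → (ℤ → E) → ℤ → E
  | 0, x, i => x (Int.fdiv i 2)
  | p + 1, x, i => (2⁻¹ : ℝ) • (S p x i + S p x (i + 1))

/-- Euclidean scalar product on `ℝ²`. -/
noncomputable def dot (u w : ℝ × ℝ) : ℝ := u.1 * w.1 + u.2 * w.2

/-- Rotation by 90°: `u^⊥ = (−u₂, u₁)`. -/
def perp (u : ℝ × ℝ) : ℝ × ℝ := (-u.2, u.1)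

lemma S_bound (p : ℕ) : ∀ (e : ℤ → ℝ) (K : ℤ) (B : ℝ),
    (∀ j : ℤ, K ≤ j → j ≤ K + p → |e (Int.fdiv j 2)| ≤ B) → |S p e K| ≤ B := by
  induction p with
  | zero => intro e K B hb; simpa [S] using hb K le_rfl (by omega)
  | succ p ih =>
    intro e K B hb
    have h1 := ih e K B (fun j hj hj' => hb j hj (by omega))
    have h2 := ih e (K+1) B (fun j hj hj' => hb j (by omega) (by omega))
    have : |S (p+1) e K| ≤ 2⁻¹ * (|S p e K| + |S p e (K+1)|) := by
      show |(2⁻¹:ℝ) • (S p e K + S p e (K+1))| ≤ _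
      rw [smul_eq_mul, abs_mul]
      have := abs_add_le (S p e K) (S p e (K+1))
      rw [abs_of_pos (by norm_num : (0:ℝ) < 2⁻¹)]
      nlinarith
    linarith

lemma S_affine (p : ℕ) (c : ℝ) (x : ℤ → ℝ × ℝ) (s : ℤ → ℝ) (u : ℝ × ℝ) :
    ∀ K, S p (fun k => c - (dot (x k) u - s k)) K = c - (dot (S p x K) u - S p s K) := by
  induction p with
  | zero => intro K; rfl
  | succ p ih =>
    intro K
    show (2⁻¹:ℝ) • (S p _ K + S p _ (K+1)) = c -
      (dot ((2⁻¹:ℝ) • (S p x K + S p x (K+1))) u - (2⁻¹:ℝ) • (S p s K + S p s (K+1)))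
    rw [ih K, ih (K+1)]
    simp only [dot, Prod.fst_add, Prod.snd_add, Prod.smul_fst, Prod.smul_snd, smul_eq_mul]
    ring

lemma abs_sub_le_of_uIcc {ξ t u : ℝ} (h : u ∈ Set.uIcc ξ t) : |u - ξ| ≤ |t - ξ| := by
  rw [Set.mem_uIcc] at h
  rw [abs_le]
  rcases h with ⟨h1, h2⟩ | ⟨h1, h2⟩
  · exact ⟨by linarith [abs_nonneg (t - ξ)], by linarith [le_abs_self (t - ξ)]⟩
  · exact ⟨by linarith [neg_abs_le (t - ξ)], by linarith [abs_nonneg (t - ξ)]⟩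

lemma mvt_step {f f' : ℝ → ℝ} (hf : ∀ x, HasDerivAt f (f' x) x) {ξ t c : ℝ}
    (hb : ∀ u ∈ Set.uIcc ξ t, |f' u| ≤ c) : |f t - f ξ| ≤ c * |t - ξ| := by
  have := Convex.norm_image_sub_le_of_norm_hasDerivWithin_le
    (f := f) (f' := f') (s := Set.uIcc ξ t)
    (fun x _ => (hf x).hasDerivWithinAt) (fun x hx => by simpa [Real.norm_eq_abs] using hb x hx)
    (convex_uIcc ξ t) Set.left_mem_uIcc Set.right_mem_uIcc
  simpa [Real.norm_eq_abs] using this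

lemma hasDerivAt_dot {w : ℝ → ℝ × ℝ} {w' : ℝ × ℝ} {t : ℝ} (hw : HasDerivAt w w' t) (u : ℝ × ℝ) :
    HasDerivAt (fun τ => dot (w τ) u) (dot w' u) t := by
  have h1 : HasDerivAt (fun τ => (w τ).1) w'.1 t :=
    (ContinuousLinearMap.fst ℝ ℝ ℝ).hasFDerivAt.comp_hasDerivAt t hw
  have h2 : HasDerivAt (fun τ => (w τ).2) w'.2 t :=
    (ContinuousLinearMap.snd ℝ ℝ ℝ).hasFDerivAt.comp_hasDerivAt t hw
  exact (h1.mul_const u.1).add (h2.mul_const u.2)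

/-- One-step offset bound for the `S_p` normal multiscale transform (`p ≥ 3`, `C³` curve):
if `v(s̄) = (S_p(v∘s))_K + d·n(ξ)` with `ξ`, `s̄` within `C₁·h` of the local parameters,
where `h` is the local mesh size, then `|s̄ − (S_p s)_K| ≤ C·h³`. -/
theorem offset_third_order (p : ℕ) (hp : 3 ≤ p) (C₁ : ℝ) (hC₁ : 0 < C₁)
    (L : ℝ) (hL : 0 < L) (v : ℝ → ℝ × ℝ) (hper : ∀ t, v (t + L) = v t)
    (hreg : ContDiff ℝ 3 v) (hunit : ∀ t, dot (deriv v t) (deriv v t) = 1) :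
    ∃ C : ℝ, 0 < C ∧ ∀ (s : ℤ → ℝ) (i K : ℤ), 2 * i ≤ K → K ≤ 2 * i + p + 2 →
      ∀ (ξ sb d h : ℝ),
      h = (Finset.Icc i (i + p)).sup' (Finset.nonempty_Icc.mpr (by omega))
            (fun l => |s (l + 1) - s l|) →
      v sb = S p (fun k => v (s k)) K + d • perp (deriv v ξ) →
      (∀ k : ℤ, i ≤ k → k ≤ i + p + 1 → |ξ - s k| ≤ C₁ * h) →
      |sb - ξ| ≤ C₁ * h →
      |sb - S p s K| ≤ C * h ^ 3 := by
  set v1 := deriv v with hv1def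
  set v2 := deriv v1 with hv2def
  set v3 := deriv v2 with hv3def
  -- regularity chain
  have hreg' : ContDiff ℝ (2 + 1) v := by
    rw [show ((2:WithTop ℕ∞) + 1) = 3 by norm_num]; exact hreg
  obtain ⟨hdv, -, hc2⟩ := contDiff_succ_iff_deriv.mp hreg'
  have hc2' : ContDiff ℝ (1 + 1) v1 := by
    rw [show ((1:WithTop ℕ∞) + 1) = 2 by norm_num]; exact hc2
  obtain ⟨hdv1, -, hc1⟩ := contDiff_succ_iff_deriv.mp hc2'
  obtain ⟨hdv2, hcv3⟩ := contDiff_one_iff_deriv.mp hc1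
  have hv : ∀ t, HasDerivAt v (v1 t) t := fun t => (hdv t).hasDerivAt
  have hvd1 : ∀ t, HasDerivAt v1 (v2 t) t := fun t => (hdv1 t).hasDerivAt
  have hvd2 : ∀ t, HasDerivAt v2 (v3 t) t := fun t => (hdv2 t).hasDerivAt
  -- periodicity of the third derivative
  have per_d : ∀ (f : ℝ → ℝ × ℝ), (∀ t, f (t + L) = f t) → ∀ t, deriv f (t + L) = deriv f t := by
    intro f hf t
    have hfe : (fun x => f (x + L)) = f := funext hf
    rw [← deriv_comp_add_const, hfe]
  have hper1 : ∀ t, v1 (t + L) = v1 t := per_d v hper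
  have hper2 : ∀ t, v2 (t + L) = v2 t := per_d v1 hper1
  have hper3 : ∀ t, v3 (t + L) = v3 t := per_d v2 hper2
  -- bound on the third derivative
  set B : ℝ → ℝ := fun t => |(v3 t).1| + |(v3 t).2| with hBdef
  have hBcont : Continuous B :=
    ((continuous_fst.comp hcv3).abs).add ((continuous_snd.comp hcv3).abs)
  obtain ⟨t0, ht0, hmax⟩ := isCompact_Icc.exists_isMaxOn (s := Set.Icc (0:ℝ) L)
    ⟨0, by constructor <;> linarith⟩ hBcont.continuousOn
  set M := B t0 with hMdef
  have hM0 : 0 ≤ M := add_nonneg (abs_nonneg _) (abs_nonneg _)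
  have hBper : Function.Periodic B L := fun t => by simp only [hBdef, hper3 t]
  have hMB : ∀ t, B t ≤ M := by
    intro t
    obtain ⟨y, hy, hyeq⟩ := hBper.exists_mem_Ico₀ hL t
    rw [hyeq]; exact hmax (Set.Ico_subset_Icc_self hy)
  have hdot3 : ∀ (t : ℝ) (u : ℝ × ℝ), |u.1| ≤ 1 → |u.2| ≤ 1 → |dot (v3 t) u| ≤ M := by
    intro t u hu1 hu2
    have h1 : |dot (v3 t) u| ≤ |(v3 t).1| * |u.1| + |(v3 t).2| * |u.2| := by
      rw [show dot (v3 t) u = (v3 t).1 * u.1 + (v3 t).2 * u.2 from rfl]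
      calc |(v3 t).1 * u.1 + (v3 t).2 * u.2| ≤ |(v3 t).1 * u.1| + |(v3 t).2 * u.2| :=
            abs_add_le _ _
        _ = |(v3 t).1| * |u.1| + |(v3 t).2| * |u.2| := by rw [abs_mul, abs_mul]
    have h2 : |(v3 t).1| * |u.1| + |(v3 t).2| * |u.2| ≤ B t := by
      have := abs_nonneg (v3 t).1
      have := abs_nonneg (v3 t).2
      have := abs_nonneg u.1
      have := abs_nonneg u.2
      simp only [hBdef]
      nlinarith
    linarith [hMB t]
  -- orthogonality of v2 and v1
  have horth : ∀ t, dot (v2 t) (v1 t) = 0 := by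
    intro t
    have h1 : HasDerivAt (fun τ => (v1 τ).1) (v2 t).1 t :=
      (ContinuousLinearMap.fst ℝ ℝ ℝ).hasFDerivAt.comp_hasDerivAt t (hvd1 t)
    have h2 : HasDerivAt (fun τ => (v1 τ).2) (v2 t).2 t :=
      (ContinuousLinearMap.snd ℝ ℝ ℝ).hasFDerivAt.comp_hasDerivAt t (hvd1 t)
    have hprod : HasDerivAt (fun τ => (v1 τ).1 * (v1 τ).1 + (v1 τ).2 * (v1 τ).2)
        ((v2 t).1 * (v1 t).1 + (v1 t).1 * (v2 t).1 + ((v2 t).2 * (v1 t).2 + (v1 t).2 * (v2 t).2))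
        t := (h1.mul h1).add (h2.mul h2)
    have hEq : (fun τ => (v1 τ).1 * (v1 τ).1 + (v1 τ).2 * (v1 τ).2) = fun _ => (1:ℝ) := by
      funext τ; exact hunit τ
    rw [hEq] at hprod
    have h0 := hprod.unique (hasDerivAt_const t 1)
    show (v2 t).1 * (v1 t).1 + (v2 t).2 * (v1 t).2 = 0
    linear_combination h0 / 2
  refine ⟨2 * M * C₁ ^ 3 + 1, by nlinarith [pow_pos hC₁ 3], ?_⟩
  intro s i K hK1 hK2 ξ sb d h hh heq hξclose hsbclose
  have hh0 : 0 ≤ h := by nlinarith [abs_nonneg (sb - ξ), hsbclose]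
  set u : ℝ × ℝ := v1 ξ with hudef
  have hu : u.1 * u.1 + u.2 * u.2 = 1 := hunit ξ
  have hu1 : |u.1| ≤ 1 := by nlinarith [abs_nonneg u.1, sq_abs u.1, sq_nonneg u.2]
  have hu2 : |u.2| ≤ 1 := by nlinarith [abs_nonneg u.2, sq_abs u.2, sq_nonneg u.1]
  set F : ℝ → ℝ := fun t => dot (v t) u - t with hFdef
  set G : ℝ → ℝ := fun t => dot (v1 t) u - 1 with hGdef
  have hFd : ∀ t, HasDerivAt F (G t) t := by
    intro t
    exact (hasDerivAt_dot (hv t) u).sub (hasDerivAt_id t)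
  have hGd : ∀ t, HasDerivAt G (dot (v2 t) u) t := by
    intro t
    exact (hasDerivAt_dot (hvd1 t) u).sub_const 1
  have hHd : ∀ t, HasDerivAt (fun t => dot (v2 t) u) (dot (v3 t) u) t :=
    fun t => hasDerivAt_dot (hvd2 t) u
  have hHξ : dot (v2 ξ) u = 0 := horth ξ
  have hGξ : G ξ = 0 := by
    simp only [hGdef]
    have : dot (v1 ξ) u = 1 := hunit ξ
    rw [this]; ring
  have stepH : ∀ t, |dot (v2 t) u| ≤ M * |t - ξ| := by
    intro t
    have := mvt_step hHd (ξ := ξ) (t := t) (c := M) (fun τ _ => hdot3 τ u hu1 hu2)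
    rw [hHξ, sub_zero] at this
    exact this
  have stepG : ∀ t, |G t| ≤ M * |t - ξ| ^ 2 := by
    intro t
    have hb : ∀ τ ∈ Set.uIcc ξ t, |dot (v2 τ) u| ≤ M * |t - ξ| := by
      intro τ hτ
      exact (stepH τ).trans (mul_le_mul_of_nonneg_left (abs_sub_le_of_uIcc hτ) hM0)
    have := mvt_step hGd (ξ := ξ) (t := t) (c := M * |t - ξ|) hb
    rw [hGξ, sub_zero] at this
    calc |G t| ≤ M * |t - ξ| * |t - ξ| := this
      _ = M * |t - ξ| ^ 2 := by ring
  have stepF : ∀ t, |F t - F ξ| ≤ M * |t - ξ| ^ 3 := by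
    intro t
    have hb : ∀ τ ∈ Set.uIcc ξ t, |G τ| ≤ M * |t - ξ| ^ 2 := by
      intro τ hτ
      refine (stepG τ).trans (mul_le_mul_of_nonneg_left ?_ hM0)
      exact pow_le_pow_left₀ (abs_nonneg _) (abs_sub_le_of_uIcc hτ) 2
    have := mvt_step hFd (ξ := ξ) (t := t) (c := M * |t - ξ| ^ 2) hb
    calc |F t - F ξ| ≤ M * |t - ξ| ^ 2 * |t - ξ| := this
      _ = M * |t - ξ| ^ 3 := by ring
  -- the key algebraic identity
  have hdotid : dot (v sb) u = dot (S p (fun k => v (s k)) K) u := by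
    rw [heq]
    simp only [dot, perp, Prod.fst_add, Prod.snd_add, Prod.smul_fst, Prod.smul_snd, smul_eq_mul]
    ring
  have key := S_affine p (dot (v sb) u - sb) (fun k => v (s k)) s u K
  have key2 : S p (fun k => (dot (v sb) u - sb) - (dot (v (s k)) u - s k)) K = S p s K - sb := by
    rw [key, hdotid]; ring
  -- the bound on the averaged sequence
  have hfin : |S p (fun k => (dot (v sb) u - sb) - (dot (v (s k)) u - s k)) K|
      ≤ 2 * M * C₁ ^ 3 * h ^ 3 := by
    refine S_bound p _ K _ ?_
    intro j hj hj'
    set k : ℤ := Int.fdiv j 2 with hkdef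
    have hke : k = j / 2 := Int.fdiv_eq_ediv_of_nonneg j (by norm_num)
    have hki : i ≤ k := by omega
    have hki' : k ≤ i + p + 1 := by omega
    have hsk : |s k - ξ| ≤ C₁ * h := by
      rw [abs_sub_comm]; exact hξclose k hki hki'
    have hFsb : |F sb - F ξ| ≤ M * (C₁ * h) ^ 3 := by
      refine (stepF sb).trans (mul_le_mul_of_nonneg_left ?_ hM0)
      exact pow_le_pow_left₀ (abs_nonneg _) hsbclose 3
    have hFsk : |F (s k) - F ξ| ≤ M * (C₁ * h) ^ 3 := by
      refine (stepF (s k)).trans (mul_le_mul_of_nonneg_left ?_ hM0)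
      exact pow_le_pow_left₀ (abs_nonneg _) hsk 3
    have hek : (dot (v sb) u - sb) - (dot (v (s k)) u - s k)
        = (F sb - F ξ) - (F (s k) - F ξ) := by
      simp only [hFdef]; ring
    rw [hek]
    calc |(F sb - F ξ) - (F (s k) - F ξ)| ≤ |F sb - F ξ| + |F (s k) - F ξ| := abs_sub _ _
      _ ≤ M * (C₁ * h) ^ 3 + M * (C₁ * h) ^ 3 := add_le_add hFsb hFsk
      _ = 2 * M * C₁ ^ 3 * h ^ 3 := by ring
  rw [key2] at hfin
  have h3 : 0 ≤ h ^ 3 := pow_nonneg hh0 3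
  calc |sb - S p s K| = |S p s K - sb| := abs_sub_comm _ _
    _ ≤ 2 * M * C₁ ^ 3 * h ^ 3 := hfin
    _ ≤ (2 * M * C₁ ^ 3 + 1) * h ^ 3 := by nlinarith
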